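/- Let T_i be integer matrices indexed by a finite set I, and f = (f_i) a vector of positive reals with Σ_j f_j |(T_i)_{jk}| ≤ f_i f_k for all i, k (entrywise domination by a Frobenius-Perron system). Then for any eigenvalue μ of T_i one has |μ| ≤ f_i. In particular the squared norm |V|² of a simple object V in a fusion category over ℂ satisfies |V|² ≤ FPdim(V)². -/

import Mathlib

/-- Spectral radius bound: if `T i` are integer matrices and `f` is a vector of positive
reals with `∑ j, f j * |(T i)_{jk}| ≤ f i * f k` for all `i, k`, then every complex
eigenvalue `μ` of `T i` satisfies `|μ| ≤ f i`.  (Hence `|V|² ≤ FPdim(V)²` for simple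
objects of a fusion category over ℂ.) -/
theorem stmt11 (I : Type*) [Fintype I]
    (T : I → Matrix I I ℤ)
    (f : I → ℝ) (hf : ∀ i, 0 < f i)
    (hdom : ∀ i k, ∑ j, f j * |((T i j k : ℤ) : ℝ)| ≤ f i * f k) :
    ∀ (i : I) (μ : ℂ),
      (∃ v : I → ℂ, v ≠ 0 ∧ ((T i).map (fun x : ℤ => (x : ℂ))).mulVec v = μ • v) →
      ‖μ‖ ≤ f i := by
  rintro i μ ⟨v, hv, heq⟩
  set S := ∑ j, f j * ‖v j‖ with hS
  have hSpos : 0 < S := by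
    obtain ⟨j, hj⟩ := Function.ne_iff.mp hv
    refine Finset.sum_pos' (fun j _ => mul_nonneg (hf j).le (norm_nonneg _)) ?_
    exact ⟨j, Finset.mem_univ j, mul_pos (hf j) (by simpa using hj)⟩
  have key : ‖μ‖ * S ≤ f i * S := by
    calc ‖μ‖ * S = ∑ j, f j * ‖μ * v j‖ := by
          rw [hS, Finset.mul_sum]
          refine Finset.sum_congr rfl fun j _ => by rw [norm_mul]; ring
      _ ≤ ∑ j, f j * ∑ k, |((T i j k : ℤ) : ℝ)| * ‖v k‖ := by
          refine Finset.sum_le_sum fun j _ => ?_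
          refine mul_le_mul_of_nonneg_left ?_ (hf j).le
          have h1 : μ * v j = ∑ k, ((T i j k : ℤ) : ℂ) * v k := by
            have := congrFun heq j
            simp only [Matrix.mulVec, dotProduct, Matrix.map_apply,
              Pi.smul_apply, smul_eq_mul] at this
            exact this.symm
          rw [h1]
          refine le_trans (norm_sum_le _ _) ?_
          refine Finset.sum_le_sum fun k _ => ?_
          rw [norm_mul]
          gcongr
          rw [Complex.norm_intCast]
      _ = ∑ k, (∑ j, f j * |((T i j k : ℤ) : ℝ)|) * ‖v k‖ := by
          simp_rw [Finset.mul_sum]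
          rw [Finset.sum_comm]
          refine Finset.sum_congr rfl fun k _ => ?_
          rw [Finset.sum_mul]
          refine Finset.sum_congr rfl fun j _ => by ring
      _ ≤ ∑ k, (f i * f k) * ‖v k‖ := by
          refine Finset.sum_le_sum fun k _ => ?_
          exact mul_le_mul_of_nonneg_right (hdom i k) (norm_nonneg _)
      _ = f i * S := by
          rw [hS, Finset.mul_sum]
          refine Finset.sum_congr rfl fun k _ => by ring
  exact le_of_mul_le_mul_right key hSpos
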